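/- Green's formula with interface conditions: let s < t be real numbers with s, t ∉ {t_n : n}, and let u, v : [s, t] → ℂ be functions whose restriction to the closure of each connected component of [s,t] ∖ {t_n : n} is twice continuously differentiable, and which satisfy at every atom t_n ∈ (s, t) the interface conditions u(t_n+) = √b_n · u(t_n−), u'(t_n+) = u'(t_n−)/√b_n, and likewise for v. Then ∫_s^t ( u''(r) · conj(v(r)) − u(r) · conj(v''(r)) ) dr = W(u, v̄)(t) − W(u, v̄)(s), where W(f, g)(r) := f'(r)g(r) − f(r)g'(r) and v̄ denotes the pointwise complex conjugate of v. -/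

import Mathlib

open Set Filter Topology MeasureTheory

/-- The part of the interval `J` off the atoms `{tₙ}`. -/
def offAtoms (ts : ℕ → ℝ) (J : Set ℝ) : Set ℝ := J \ Set.range ts

/-- One-sided limits of `u` and its derivative exist at the atom `ts n`, and the
interface conditions `u(tₙ+) = √bₙ · u(tₙ-)`, `u'(tₙ+) = u'(tₙ-)/√bₙ` hold. -/
def InterfaceAt (ts bs : ℕ → ℝ) (S : Set ℝ) (u : ℝ → ℂ) (n : ℕ) : Prop :=
  ∃ uL uR duL duR : ℂ,
    Tendsto u (nhdsWithin (ts n) (S ∩ Iio (ts n))) (nhds uL) ∧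
    Tendsto u (nhdsWithin (ts n) (S ∩ Ioi (ts n))) (nhds uR) ∧
    Tendsto (derivWithin u S) (nhdsWithin (ts n) (S ∩ Iio (ts n))) (nhds duL) ∧
    Tendsto (derivWithin u S) (nhdsWithin (ts n) (S ∩ Ioi (ts n))) (nhds duR) ∧
    uR = (Real.sqrt (bs n) : ℂ) * uL ∧
    duR = duL / (Real.sqrt (bs n) : ℂ)

/-- `u` is a solution of the interface equation `-u'' = z·u` for the atomic measure
with atoms `ts n` and branching numbers `bs n`, on the interval `J`:
`u` is twice continuously differentiable on `J` off the atoms with `-u'' = z·u` there,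
and at every atom in the interior of `J` it has one-sided limits satisfying
the interface conditions. -/
def IsInterfaceSolution (ts bs : ℕ → ℝ) (z : ℂ) (J : Set ℝ) (u : ℝ → ℂ) : Prop :=
  ContDiffOn ℝ 2 u (offAtoms ts J) ∧
  (∀ x ∈ offAtoms ts J,
      -(derivWithin (derivWithin u (offAtoms ts J)) (offAtoms ts J) x) = z * u x) ∧
  (∀ n, ts n ∈ interior J → InterfaceAt ts bs (offAtoms ts J) u n)

/-- The Wronskian `W(f, g)(r) = f'(r)·g(r) - f(r)·g'(r)`, with derivatives taken
within the set `S`. -/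
noncomputable def wron (S : Set ℝ) (f g : ℝ → ℂ) (r : ℝ) : ℂ :=
  derivWithin f S r * g r - f r * derivWithin g S r

/-- The Wronskian `W(f, ḡ)(r)` of `f` and the pointwise complex conjugate of `g`. -/
noncomputable def wronConj (S : Set ℝ) (f g : ℝ → ℂ) (r : ℝ) : ℂ :=
  derivWithin f S r * (starRingEnd ℂ) (g r)
    - f r * (starRingEnd ℂ) (derivWithin g S r)

/-- Piecewise `C²` regularity up to the closure of each component: `u` is `C²` on
`[s, τ]` off the atoms, and at each atom in `(s, τ)` the one-sided limits of
`u`, `u'` (with interface conditions) and of `u''` exist. -/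
def GreenHypothesis (ts bs : ℕ → ℝ) (s τ : ℝ) (u : ℝ → ℂ) : Prop :=
  ContDiffOn ℝ 2 u (offAtoms ts (Icc s τ)) ∧
  ∀ n, ts n ∈ Ioo s τ →
    InterfaceAt ts bs (offAtoms ts (Icc s τ)) u n ∧
    (∃ L : ℂ, Tendsto
        (derivWithin (derivWithin u (offAtoms ts (Icc s τ))) (offAtoms ts (Icc s τ)))
        (nhdsWithin (ts n) (offAtoms ts (Icc s τ) ∩ Iio (ts n))) (nhds L)) ∧
    (∃ L : ℂ, Tendsto
        (derivWithin (derivWithin u (offAtoms ts (Icc s τ))) (offAtoms ts (Icc s τ)))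
        (nhdsWithin (ts n) (offAtoms ts (Icc s τ) ∩ Ioi (ts n))) (nhds L))

section Aux

/-- Extension of `F` to a closed interval by prescribed endpoint values. -/
noncomputable def extFn (F : ℝ → ℂ) (a b : ℝ) (La Lb : ℂ) : ℝ → ℂ :=
  fun x => if x <= a then La else if b <= x then Lb else F x

lemma extFn_eq_on {F : ℝ → ℂ} {a b : ℝ} {La Lb : ℂ} {x : ℝ} (hx : x ∈ Ioo a b) :
    extFn F a b La Lb x = F x := by
  simp only [extFn, if_neg (not_le.2 hx.1), if_neg (not_le.2 hx.2)]

lemma extFn_cont {F : ℝ → ℂ} {a b : ℝ} {La Lb : ℂ} (hab : a < b)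
    (hc : ∀ x ∈ Ioo a b, ContinuousAt F x)
    (hFa : Tendsto F (𝓝[Ioo a b] a) (𝓝 La)) (hFb : Tendsto F (𝓝[Ioo a b] b) (𝓝 Lb)) :
    ContinuousOn (extFn F a b La Lb) (Icc a b) := by
  have hext : ∀ x ∈ Ioo a b, extFn F a b La Lb x = F x := fun x hx => extFn_eq_on hx
  have hA : ContinuousWithinAt (extFn F a b La Lb) (Icc a b) a := by
    have ha : extFn F a b La Lb a = La := by simp [extFn]
    unfold ContinuousWithinAt
    rw [ha, ← Set.Ioc_insert_left hab.le, nhdsWithin_insert]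
    refine Tendsto.sup ?_ ?_
    · simpa [ha] using tendsto_pure_nhds (extFn F a b La Lb) a
    · have heq : 𝓝[Ioc a b] a = 𝓝[Ioo a b] a := by
        refine nhdsWithin_eq_nhdsWithin' (Iio_mem_nhds hab) ?_
        ext y; simp only [mem_inter_iff, mem_Ioc, mem_Ioo, mem_Iio]
        constructor
        · rintro ⟨⟨u1, u2⟩, u3⟩; exact ⟨⟨u1, u3⟩, u3⟩
        · rintro ⟨⟨u1, u2⟩, u3⟩; exact ⟨⟨u1, u2.le⟩, u3⟩
      rw [heq]
      exact hFa.congr' (eventually_mem_nhdsWithin.mono fun y hy => (hext y hy).symm)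
  have hB : ContinuousWithinAt (extFn F a b La Lb) (Icc a b) b := by
    have hb : extFn F a b La Lb b = Lb := by simp [extFn, not_le.2 hab]
    unfold ContinuousWithinAt
    rw [hb, ← Set.Ico_insert_right hab.le, nhdsWithin_insert]
    refine Tendsto.sup ?_ ?_
    · simpa [hb] using tendsto_pure_nhds (extFn F a b La Lb) b
    · have heq : 𝓝[Ico a b] b = 𝓝[Ioo a b] b := by
        refine nhdsWithin_eq_nhdsWithin' (Ioi_mem_nhds hab) ?_
        ext y; simp only [mem_inter_iff, mem_Ico, mem_Ioo, mem_Ioi]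
        constructor
        · rintro ⟨⟨u1, u2⟩, u3⟩; exact ⟨⟨u3, u2⟩, u3⟩
        · rintro ⟨⟨u1, u2⟩, u3⟩; exact ⟨⟨u1.le, u2⟩, u3⟩
      rw [heq]
      exact hFb.congr' (eventually_mem_nhdsWithin.mono fun y hy => (hext y hy).symm)
  intro x hx
  rcases eq_or_lt_of_le hx.1 with h1 | h1
  · exact h1 ▸ hA
  · rcases eq_or_lt_of_le hx.2 with h2 | h2
    · exact h2 ▸ hB
    · have : ContinuousAt (extFn F a b La Lb) x := by
        refine (hc x ⟨h1, h2⟩).congr ?_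
        filter_upwards [Ioo_mem_nhds h1 h2] with y hy
        exact (hext y hy).symm
      exact this.continuousWithinAt

/-- FTC on one open piece, with one-sided limits at the endpoints. -/
lemma lemA {F f : ℝ → ℂ} {a b : ℝ} {La Lb la lb : ℂ} (hab : a < b)
    (hF : ∀ x ∈ Ioo a b, HasDerivAt F (f x) x)
    (hf : ∀ x ∈ Ioo a b, ContinuousAt f x)
    (hFa : Tendsto F (𝓝[Ioo a b] a) (𝓝 La)) (hFb : Tendsto F (𝓝[Ioo a b] b) (𝓝 Lb))
    (hfa : Tendsto f (𝓝[Ioo a b] a) (𝓝 la)) (hfb : Tendsto f (𝓝[Ioo a b] b) (𝓝 lb)) :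
    IntervalIntegrable f volume a b ∧ (∫ x in a..b, f x) = Lb - La := by
  set G := extFn F a b La Lb with hGdef
  set g := extFn f a b la lb with hgdef
  have hGc : ContinuousOn G (Icc a b) :=
    extFn_cont hab (fun x hx => (hF x hx).continuousAt) hFa hFb
  have hgc : ContinuousOn g (Icc a b) := extFn_cont hab hf hfa hfb
  have hgint : IntervalIntegrable g volume a b := by
    apply ContinuousOn.intervalIntegrable
    rwa [Set.uIcc_of_le hab.le]
  have hGd : ∀ x ∈ Ioo a b, HasDerivWithinAt G (g x) (Ioi x) x := by
    intro x hx
    have hD : HasDerivAt G (f x) x := by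
      refine (hF x hx).congr_of_eventuallyEq ?_
      filter_upwards [Ioo_mem_nhds hx.1 hx.2] with y hy
      exact extFn_eq_on hy
    rw [show g x = f x from extFn_eq_on hx]
    exact hD.hasDerivWithinAt
  have hint : (∫ x in a..b, g x) = G b - G a :=
    intervalIntegral.integral_eq_sub_of_hasDeriv_right_of_le hab.le hGc hGd hgint
  have haeb : ∀ᵐ x : ℝ, x ∉ ({b} : Set ℝ) := by
    rw [← MeasureTheory.measure_eq_zero_iff_ae_notMem]
    simp
  have haeeq : ∀ᵐ x : ℝ, x ∈ Set.uIoc a b → f x = g x := by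
    filter_upwards [haeb] with x hxb hx
    rw [Set.uIoc_of_le hab.le] at hx
    have hxo : x ∈ Ioo a b := ⟨hx.1, lt_of_le_of_ne hx.2 (by simpa using hxb)⟩
    exact (extFn_eq_on hxo).symm
  constructor
  · rw [intervalIntegrable_iff] at hgint ⊢
    refine hgint.congr ?_
    exact (ae_restrict_iff' measurableSet_uIoc).2
      (haeeq.mono fun x h hx => (h hx).symm)
  · rw [intervalIntegral.integral_congr_ae haeeq, hint]
    have hGb : G b = Lb := by simp [hGdef, extFn, not_le.2 hab]
    have hGa : G a = La := by simp [hGdef, extFn]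
    rw [hGb, hGa]

end Aux

section Ctx
variable {ts : ℕ → ℝ} {γ : ℝ}

lemma ts_lower (hγ : 0 < γ) (hgap : ∀ n, γ ≤ ts (n + 1) - ts n) (n : ℕ) : ts 0 + n * γ ≤ ts n := by
  induction n with
  | zero => simp
  | succ k ih =>
    have := hgap k
    push_cast
    linarith

lemma atoms_finite (hγ : 0 < γ) (hgap : ∀ n, γ ≤ ts (n + 1) - ts n) (c d : ℝ) : {n | ts n ∈ Icc c d}.Finite := by
  apply Set.Finite.subset (Set.finite_Icc 0 ⌈(d - ts 0) / γ⌉₊)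
  intro n hn
  simp only [mem_setOf_eq, mem_Icc] at hn ⊢
  refine ⟨Nat.zero_le _, ?_⟩
  have h1 := ts_lower hγ hgap n
  have h2 : (n : ℝ) ≤ (d - ts 0) / γ := by
    rw [le_div_iff₀ hγ]; nlinarith [hn.2]
  exact_mod_cast (Nat.cast_le (α := ℝ)).1 (h2.trans (Nat.le_ceil _))

lemma atoms_sep (hγ : 0 < γ) (hgap : ∀ n, γ ≤ ts (n + 1) - ts n) {x : ℝ} (hx : x ∉ Set.range ts) :
    ∃ ε > 0, ∀ k, ts k ∉ Ioo (x - ε) (x + ε) := by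
  have hfin := atoms_finite hγ hgap (x - 1) (x + 1)
  by_cases hne : {n | ts n ∈ Icc (x - 1) (x + 1)}.Nonempty
  · set Tf := hfin.toFinset with hTf
    have hTfne : Tf.Nonempty := by rwa [hTf, Set.Finite.toFinset_nonempty]
    set d := Tf.inf' hTfne (fun n => |ts n - x|) with hd
    have hdpos : 0 < d := by
      rw [hd, Finset.lt_inf'_iff]
      intro n _
      exact abs_pos.2 (sub_ne_zero.2 fun h => hx ⟨n, h⟩)
    refine ⟨min 1 d, lt_min one_pos hdpos, fun k hk => ?_⟩
    have h1 : |ts k - x| < min 1 d := abs_lt.2 ⟨by linarith [hk.1], by linarith [hk.2]⟩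
    have h2 : ts k ∈ Icc (x - 1) (x + 1) := by
      have := abs_lt.1 (lt_of_lt_of_le h1 (min_le_left _ _))
      exact ⟨by linarith [this.1], by linarith [this.2]⟩
    have hkTf : k ∈ Tf := by rw [hTf, Set.Finite.mem_toFinset]; exact h2
    have := Finset.inf'_le (fun n => |ts n - x|) hkTf
    have h3 : min 1 d ≤ d := min_le_right _ _
    rw [← hd] at this
    linarith [lt_of_lt_of_le h1 h3]
  · refine ⟨1, one_pos, fun k hk => ?_⟩
    exact hne ⟨k, ⟨(hk.1).le, (hk.2).le⟩⟩

variable {s τ : ℝ}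

lemma S_nhdsWithin_eq (hγ : 0 < γ) (hgap : ∀ n, γ ≤ ts (n + 1) - ts n) {x : ℝ} (hx : x ∉ Set.range ts) :
    𝓝[offAtoms ts (Icc s τ)] x = 𝓝[Icc s τ] x := by
  obtain ⟨ε, hε, hsep⟩ := atoms_sep hγ hgap hx
  have hIoo : Ioo (x - ε) (x + ε) ∈ 𝓝 x := Ioo_mem_nhds (by linarith) (by linarith)
  have h2 : offAtoms ts (Icc s τ) ∩ Ioo (x - ε) (x + ε)
      = Icc s τ ∩ Ioo (x - ε) (x + ε) := by
    ext y
    simp only [offAtoms, mem_inter_iff, mem_diff]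
    constructor
    · rintro ⟨⟨h1, _⟩, h3⟩; exact ⟨h1, h3⟩
    · rintro ⟨h1, h3⟩
      exact ⟨⟨h1, fun ⟨k, hk⟩ => hsep k (hk ▸ h3)⟩, h3⟩
  rw [nhdsWithin_restrict' _ hIoo, h2, ← nhdsWithin_restrict' _ hIoo]

lemma S_uniqueDiff (hγ : 0 < γ) (hgap : ∀ n, γ ≤ ts (n + 1) - ts n) (hsτ : s < τ) : UniqueDiffOn ℝ (offAtoms ts (Icc s τ)) := by
  intro x hx
  exact (uniqueDiffWithinAt_congr (S_nhdsWithin_eq hγ hgap hx.2)).2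
    (uniqueDiffOn_Icc hsτ x hx.1)

lemma S_mem_nhds (hγ : 0 < γ) (hgap : ∀ n, γ ≤ ts (n + 1) - ts n) {x : ℝ} (hx : x ∈ offAtoms ts (Icc s τ))
    (h1 : s < x) (h2 : x < τ) : offAtoms ts (Icc s τ) ∈ 𝓝 x := by
  have h3 : 𝓝[offAtoms ts (Icc s τ)] x = 𝓝 x := by
    rw [S_nhdsWithin_eq hγ hgap hx.2, nhdsWithin_eq_nhds]
    exact Icc_mem_nhds h1 h2
  have := self_mem_nhdsWithin (a := x) (s := offAtoms ts (Icc s τ))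
  rwa [h3] at this

end Ctx


/-- The Green integrand `u'' v̄ - u v̄''` with derivatives within `S`. -/
noncomputable def grn (S : Set ℝ) (u v : ℝ → ℂ) (r : ℝ) : ℂ :=
  derivWithin (derivWithin u S) S r * (starRingEnd ℂ) (v r)
    - u r * (starRingEnd ℂ) (derivWithin (derivWithin v S) S r)

section Reg
variable {S : Set ℝ} {u v : ℝ → ℂ}

lemma grn_cont (hS : UniqueDiffOn ℝ S) (hu2 : ContDiffOn ℝ 2 u S)
    (hv2 : ContDiffOn ℝ 2 v S) : ContinuousOn (grn S u v) S := by
  have hu1 : ContDiffOn ℝ 1 (derivWithin u S) S := hu2.derivWithin hS (by norm_num)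
  have hv1 : ContDiffOn ℝ 1 (derivWithin v S) S := hv2.derivWithin hS (by norm_num)
  have hu0 : ContinuousOn (derivWithin (derivWithin u S) S) S :=
    (hu1.derivWithin (m := 0) hS (by norm_num)).continuousOn
  have hv0 : ContinuousOn (derivWithin (derivWithin v S) S) S :=
    (hv1.derivWithin (m := 0) hS (by norm_num)).continuousOn
  exact (hu0.mul (Complex.continuous_conj.comp_continuousOn hv2.continuousOn)).sub
    (hu2.continuousOn.mul (Complex.continuous_conj.comp_continuousOn hv0))

lemma wron_cont (hS : UniqueDiffOn ℝ S) (hu2 : ContDiffOn ℝ 2 u S)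
    (hv2 : ContDiffOn ℝ 2 v S) : ContinuousOn (wronConj S u v) S := by
  have hu1 : ContDiffOn ℝ 1 (derivWithin u S) S := hu2.derivWithin hS (by norm_num)
  have hv1 : ContDiffOn ℝ 1 (derivWithin v S) S := hv2.derivWithin hS (by norm_num)
  exact (hu1.continuousOn.mul (Complex.continuous_conj.comp_continuousOn hv2.continuousOn)).sub
    (hu2.continuousOn.mul (Complex.continuous_conj.comp_continuousOn hv1.continuousOn))

lemma wron_hasDeriv (hS : UniqueDiffOn ℝ S) (hu2 : ContDiffOn ℝ 2 u S)
    (hv2 : ContDiffOn ℝ 2 v S) {x : ℝ} (hx : x ∈ S) (hnb : S ∈ 𝓝 x) :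
    HasDerivAt (wronConj S u v) (grn S u v x) x := by
  have hu1 : ContDiffOn ℝ 1 (derivWithin u S) S := hu2.derivWithin hS (by norm_num)
  have hv1 : ContDiffOn ℝ 1 (derivWithin v S) S := hv2.derivWithin hS (by norm_num)
  have hdu : HasDerivAt u (derivWithin u S x) x :=
    ((hu2.differentiableOn (by norm_num)) x hx).hasDerivWithinAt.hasDerivAt hnb
  have hdv : HasDerivAt v (derivWithin v S x) x :=
    ((hv2.differentiableOn (by norm_num)) x hx).hasDerivWithinAt.hasDerivAt hnb
  have hdu1 : HasDerivAt (derivWithin u S) (derivWithin (derivWithin u S) S x) x :=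
    ((hu1.differentiableOn one_ne_zero) x hx).hasDerivWithinAt.hasDerivAt hnb
  have hdv1 : HasDerivAt (derivWithin v S) (derivWithin (derivWithin v S) S x) x :=
    ((hv1.differentiableOn one_ne_zero) x hx).hasDerivWithinAt.hasDerivAt hnb
  have H := (hdu1.mul hdv.star).sub (hdu.mul hdv1.star)
  have heq : wronConj S u v
      = fun r => derivWithin u S r * star (v r) - u r * star (derivWithin v S r) := by
    funext r; simp only [wronConj, starRingEnd_apply]
  rw [heq]
  convert H using 1
  · rfl
  · rfl
  simp only [grn, starRingEnd_apply]
  ring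

end Reg

section Main

variable {ts bs : ℕ → ℝ} {γ s τ : ℝ} {u v : ℝ → ℂ}

lemma piece (hγ : 0 < γ) (hgap : ∀ n, γ ≤ ts (n + 1) - ts n) (hsτ : s < τ)
    (hu2 : ContDiffOn ℝ 2 u (offAtoms ts (Icc s τ)))
    (hv2 : ContDiffOn ℝ 2 v (offAtoms ts (Icc s τ)))
    {a b : ℝ} {La Lb la lb : ℂ} (has : s ≤ a) (hbτ : b ≤ τ) (hab : a < b)
    (hempty : ∀ k, ts k ∉ Ioo a b)
    (hWa : Tendsto (wronConj (offAtoms ts (Icc s τ)) u v)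
      (𝓝[offAtoms ts (Icc s τ) ∩ Ioi a] a) (𝓝 La))
    (hWb : Tendsto (wronConj (offAtoms ts (Icc s τ)) u v)
      (𝓝[offAtoms ts (Icc s τ) ∩ Iio b] b) (𝓝 Lb))
    (hfa : Tendsto (grn (offAtoms ts (Icc s τ)) u v)
      (𝓝[offAtoms ts (Icc s τ) ∩ Ioi a] a) (𝓝 la))
    (hfb : Tendsto (grn (offAtoms ts (Icc s τ)) u v)
      (𝓝[offAtoms ts (Icc s τ) ∩ Iio b] b) (𝓝 lb)) :
    IntervalIntegrable (grn (offAtoms ts (Icc s τ)) u v) volume a b ∧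
      (∫ x in a..b, grn (offAtoms ts (Icc s τ)) u v x) = Lb - La := by
  set S := offAtoms ts (Icc s τ) with hSdef
  have hS : UniqueDiffOn ℝ S := S_uniqueDiff hγ hgap hsτ
  have hsub : Ioo a b ⊆ S := by
    intro y hy
    refine ⟨⟨has.trans hy.1.le, hy.2.le.trans hbτ⟩, ?_⟩
    rintro ⟨k, hk⟩
    exact hempty k (hk ▸ hy)
  have hma : 𝓝[Ioo a b] a ≤ 𝓝[S ∩ Ioi a] a :=
    nhdsWithin_mono _ (fun y hy => ⟨hsub hy, hy.1⟩)
  have hmb : 𝓝[Ioo a b] b ≤ 𝓝[S ∩ Iio b] b :=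
    nhdsWithin_mono _ (fun y hy => ⟨hsub hy, hy.2⟩)
  refine lemA hab ?_ ?_ (hWa.mono_left hma) (hWb.mono_left hmb)
    (hfa.mono_left hma) (hfb.mono_left hmb)
  · intro x hx
    exact wron_hasDeriv hS hu2 hv2 (hsub hx)
      (S_mem_nhds hγ hgap (hsub hx) (has.trans_lt hx.1) (hx.2.trans_le hbτ))
  · intro x hx
    exact (grn_cont hS hu2 hv2).continuousAt
      (S_mem_nhds hγ hgap (hsub hx) (has.trans_lt hx.1) (hx.2.trans_le hbτ))

lemma mainlem (hγ : 0 < γ) (hgap : ∀ n, γ ≤ ts (n + 1) - ts n)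
    (ht_mono : StrictMono ts) (hbs : ∀ n, 1 < bs n) (hsτ : s < τ)
    (hu : GreenHypothesis ts bs s τ u) (hv : GreenHypothesis ts bs s τ v) :
    ∀ m : ℕ, ∀ a b : ℝ, ∀ La Lb la lb : ℂ, s ≤ a → b ≤ τ → a < b →
    {n | ts n ∈ Ioo a b}.ncard ≤ m →
    Tendsto (wronConj (offAtoms ts (Icc s τ)) u v)
      (𝓝[offAtoms ts (Icc s τ) ∩ Ioi a] a) (𝓝 La) →
    Tendsto (wronConj (offAtoms ts (Icc s τ)) u v)
      (𝓝[offAtoms ts (Icc s τ) ∩ Iio b] b) (𝓝 Lb) →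
    Tendsto (grn (offAtoms ts (Icc s τ)) u v)
      (𝓝[offAtoms ts (Icc s τ) ∩ Ioi a] a) (𝓝 la) →
    Tendsto (grn (offAtoms ts (Icc s τ)) u v)
      (𝓝[offAtoms ts (Icc s τ) ∩ Iio b] b) (𝓝 lb) →
    IntervalIntegrable (grn (offAtoms ts (Icc s τ)) u v) volume a b ∧
      (∫ x in a..b, grn (offAtoms ts (Icc s τ)) u v x) = Lb - La := by
  intro m
  induction m with
  | zero =>
    intro a b La Lb la lb has hbτ hab hcard hWa hWb hfa hfb
    have hfin : {n | ts n ∈ Ioo a b}.Finite :=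
      (atoms_finite hγ hgap a b).subset (fun n hn => Ioo_subset_Icc_self hn)
    have hempty : ∀ k, ts k ∉ Ioo a b := by
      intro k hk
      have h0 : {n | ts n ∈ Ioo a b}.ncard = 0 := le_antisymm hcard (Nat.zero_le _)
      rw [Set.ncard_eq_zero hfin] at h0
      exact absurd (h0 ▸ hk : k ∈ (∅ : Set ℕ)) (Set.notMem_empty k)
    exact piece hγ hgap hsτ hu.1 hv.1 has hbτ hab hempty hWa hWb hfa hfb
  | succ m ih =>
    intro a b La Lb la lb has hbτ hab hcard hWa hWb hfa hfb
    have hfin : {n | ts n ∈ Ioo a b}.Finite :=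
      (atoms_finite hγ hgap a b).subset (fun n hn => Ioo_subset_Icc_self hn)
    by_cases hne : {n | ts n ∈ Ioo a b}.Nonempty
    swap
    · have hempty : ∀ k, ts k ∉ Ioo a b := fun k hk => hne ⟨k, hk⟩
      exact piece hγ hgap hsτ hu.1 hv.1 has hbτ hab hempty hWa hWb hfa hfb
    · obtain ⟨n0, hn0A, hmin⟩ := Set.exists_min_image _ ts hfin hne
      have hx0 : ts n0 ∈ Ioo a b := hn0A
      have hx0s : s < ts n0 := has.trans_lt hx0.1
      have hx0τ : ts n0 < τ := hx0.2.trans_le hbτ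
      obtain ⟨hIu, ⟨Lu2L, hLu2L⟩, ⟨Lu2R, hLu2R⟩⟩ := hu.2 n0 ⟨hx0s, hx0τ⟩
      obtain ⟨hIv, ⟨Lv2L, hLv2L⟩, ⟨Lv2R, hLv2R⟩⟩ := hv.2 n0 ⟨hx0s, hx0τ⟩
      obtain ⟨uL, uR, duL, duR, huL, huR, hduL, hduR, hju, hjdu⟩ := hIu
      obtain ⟨vL, vR, dvL, dvR, hvL, hvR, hdvL, hdvR, hjv, hjdv⟩ := hIv
      have hWL : Tendsto (wronConj (offAtoms ts (Icc s τ)) u v)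
          (𝓝[offAtoms ts (Icc s τ) ∩ Iio (ts n0)] (ts n0))
          (𝓝 (duL * star vL - uL * star dvL)) :=
        ((hduL.mul hvL.star).sub (huL.mul hdvL.star)).congr
          (fun r => by simp only [wronConj, starRingEnd_apply])
      have hWR : Tendsto (wronConj (offAtoms ts (Icc s τ)) u v)
          (𝓝[offAtoms ts (Icc s τ) ∩ Ioi (ts n0)] (ts n0))
          (𝓝 (duR * star vR - uR * star dvR)) :=
        ((hduR.mul hvR.star).sub (huR.mul hdvR.star)).congr
          (fun r => by simp only [wronConj, starRingEnd_apply])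
      have hfL : Tendsto (grn (offAtoms ts (Icc s τ)) u v)
          (𝓝[offAtoms ts (Icc s τ) ∩ Iio (ts n0)] (ts n0))
          (𝓝 (Lu2L * star vL - uL * star Lv2L)) :=
        ((hLu2L.mul hvL.star).sub (huL.mul hLv2L.star)).congr
          (fun r => by simp only [grn, starRingEnd_apply])
      have hfR : Tendsto (grn (offAtoms ts (Icc s τ)) u v)
          (𝓝[offAtoms ts (Icc s τ) ∩ Ioi (ts n0)] (ts n0))
          (𝓝 (Lu2R * star vR - uR * star Lv2R)) :=
        ((hLu2R.mul hvR.star).sub (huR.mul hLv2R.star)).congr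
          (fun r => by simp only [grn, starRingEnd_apply])
      have hc0 : ((Real.sqrt (bs n0) : ℝ) : ℂ) ≠ 0 := by
        have h1 : (0 : ℝ) < Real.sqrt (bs n0) := Real.sqrt_pos.2 (by linarith [hbs n0])
        exact_mod_cast ne_of_gt h1
      have hjump : duR * star vR - uR * star dvR = duL * star vL - uL * star dvL := by
        rw [hju, hjdu, hjv, hjdv]
        simp only [star_mul', star_div₀, Complex.star_def, Complex.conj_ofReal]
        field_simp
      have hemptyL : ∀ k, ts k ∉ Ioo a (ts n0) := fun k hk =>
        absurd (hmin k ⟨hk.1, hk.2.trans hx0.2⟩) (not_le.2 hk.2)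
      have h1 := piece hγ hgap hsτ hu.1 hv.1 has hx0τ.le hx0.1 hemptyL hWa hWL hfa hfL
      have hset : {k | ts k ∈ Ioo (ts n0) b} = {n | ts n ∈ Ioo a b} \ {n0} := by
        ext k
        simp only [mem_setOf_eq, mem_diff, mem_singleton_iff, mem_Ioo]
        constructor
        · rintro ⟨p1, p2⟩
          exact ⟨⟨hx0.1.trans p1, p2⟩, fun h => absurd p1 (by rw [h]; exact lt_irrefl _)⟩
        · rintro ⟨⟨p1, p2⟩, pneq⟩
          refine ⟨lt_of_le_of_ne (hmin k ⟨p1, p2⟩) ?_, p2⟩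
          intro h
          exact pneq (ht_mono.injective h).symm
      have hcard' : {k | ts k ∈ Ioo (ts n0) b}.ncard ≤ m := by
        rw [hset, Set.ncard_diff_singleton_of_mem hn0A]
        omega
      have h2 := ih (ts n0) b (duR * star vR - uR * star dvR) Lb
        (Lu2R * star vR - uR * star Lv2R) lb hx0s.le hbτ hx0.2 hcard' hWR hWb hfR hfb
      refine ⟨h1.1.trans h2.1, ?_⟩
      rw [← intervalIntegral.integral_add_adjacent_intervals h1.1 h2.1, h1.2, h2.2, hjump]
      ring

end Main

/-- Green's formula with interface conditions:
`∫ₛᵗ (u'' v̄ - u v̄'') dr = W(u, v̄)(t) - W(u, v̄)(s)`. -/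
theorem green_formula
    (ts bs : ℕ → ℝ) (γ : ℝ) (hγ : 0 < γ)
    (ht_mono : StrictMono ts) (hgap : ∀ n, γ ≤ ts (n + 1) - ts n)
    (hbs : ∀ n, 1 < bs n)
    (s τ : ℝ) (hsτ : s < τ) (hs : s ∉ Set.range ts) (hτ : τ ∉ Set.range ts)
    (u v : ℝ → ℂ)
    (hu : GreenHypothesis ts bs s τ u) (hv : GreenHypothesis ts bs s τ v) :
    (∫ r in s..τ,
        (derivWithin (derivWithin u (offAtoms ts (Icc s τ))) (offAtoms ts (Icc s τ)) r
            * (starRingEnd ℂ) (v r)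
          - u r * (starRingEnd ℂ)
              (derivWithin (derivWithin v (offAtoms ts (Icc s τ))) (offAtoms ts (Icc s τ)) r)))
      = wronConj (offAtoms ts (Icc s τ)) u v τ - wronConj (offAtoms ts (Icc s τ)) u v s := by
  set S := offAtoms ts (Icc s τ) with hSdef
  have hS : UniqueDiffOn ℝ S := S_uniqueDiff hγ hgap hsτ
  have hsS : s ∈ S := ⟨⟨le_rfl, hsτ.le⟩, hs⟩
  have hτS : τ ∈ S := ⟨⟨hsτ.le, le_rfl⟩, hτ⟩
  have hWc : ContinuousOn (wronConj S u v) S := wron_cont hS hu.1 hv.1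
  have hfc : ContinuousOn (grn S u v) S := grn_cont hS hu.1 hv.1
  have hWa : Tendsto (wronConj S u v) (𝓝[S ∩ Ioi s] s) (𝓝 (wronConj S u v s)) :=
    (hWc s hsS).mono_left (nhdsWithin_mono _ inter_subset_left)
  have hWb : Tendsto (wronConj S u v) (𝓝[S ∩ Iio τ] τ) (𝓝 (wronConj S u v τ)) :=
    (hWc τ hτS).mono_left (nhdsWithin_mono _ inter_subset_left)
  have hfa : Tendsto (grn S u v) (𝓝[S ∩ Ioi s] s) (𝓝 (grn S u v s)) :=
    (hfc s hsS).mono_left (nhdsWithin_mono _ inter_subset_left)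
  have hfb : Tendsto (grn S u v) (𝓝[S ∩ Iio τ] τ) (𝓝 (grn S u v τ)) :=
    (hfc τ hτS).mono_left (nhdsWithin_mono _ inter_subset_left)
  have h := (mainlem hγ hgap ht_mono hbs hsτ hu hv
    ({n | ts n ∈ Ioo s τ}.ncard) s τ (wronConj S u v s) (wronConj S u v τ)
    (grn S u v s) (grn S u v τ) le_rfl le_rfl hsτ le_rfl hWa hWb hfa hfb).2
  exact h
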